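/- Fix τ ∈ [0, 1] and let λ₀ ≥ λ₁ ≥ λ₂ ≥ λ₃ ≥ 0 with Σλ_k = 1 and 2(1 − Σλ_k²) = τ. For 0 < α < 2 (α ≠ 1), the Tsallis α-entropy (Σλ_k^α − 1)/(1−α) is minimized, over all such distributions, uniquely (up to permutation) by λ = ((1+√(1−τ))/2, (1−√(1−τ))/2, 0, 0). -/

import Mathlib

open Real Set

section Aux
lemma psi_deriv {q : ℝ} (hq0 : q ≠ 0) {x : ℝ} (hx : (0:ℝ) < x) :
    HasDerivAt (fun t : ℝ => -(t ^ q) / q) (-(x ^ (q-1))) x := by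
  have h := ((Real.hasDerivAt_rpow_const (x := x) (p := q) (Or.inl (ne_of_gt hx))).neg).div_const q
  have e : -(q * x ^ (q-1)) / q = -(x ^ (q-1)) := by field_simp
  simpa [e] using h

lemma psi_strictConvexOn {q : ℝ} (hq1 : q < 1) (hq0 : q ≠ 0) :
    StrictConvexOn ℝ (Ioi 0) (fun t : ℝ => -(t ^ q) / q) := by
  have key2 : ∀ x ∈ Ioi (0:ℝ), HasDerivAt (fun t : ℝ => -(t ^ (q-1))) ((1-q) * x ^ (q-2)) x := by
    intro x hx
    have h := (Real.hasDerivAt_rpow_const (x := x) (p := q-1) (Or.inl (ne_of_gt hx))).neg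
    have e : q - 1 - 1 = q - 2 := by ring
    rw [e] at h
    exact h.congr_deriv (by ring)
  apply strictConvexOn_of_deriv2_pos' (convex_Ioi 0)
  · exact fun x hx => (psi_deriv hq0 hx).continuousAt.continuousWithinAt
  · intro x hx
    have h1 : deriv^[2] (fun t : ℝ => -(t ^ q) / q) x
        = deriv (fun t : ℝ => -(t ^ (q-1))) x := by
      have heq : Set.EqOn (deriv (fun t : ℝ => -(t ^ q) / q)) (fun t : ℝ => -(t ^ (q-1))) (Ioi 0) :=
        fun y hy => (psi_deriv hq0 hy).deriv
      show deriv (deriv (fun t : ℝ => -(t ^ q) / q)) x = _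
      exact Filter.EventuallyEq.deriv_eq (Filter.eventuallyEq_of_mem (isOpen_Ioi.mem_nhds hx) heq)
    rw [h1, (key2 x hx).deriv]
    have hp : (0:ℝ) < x ^ (q-2) := Real.rpow_pos_of_pos hx _
    nlinarith

lemma tangent_lt {q : ℝ} (hq1 : q < 1) (hq0 : q ≠ 0) {p : ℝ} (hp : 0 < p) :
    ∃ A B : ℝ, -(p^q)/q = A + B*p ∧ ∀ t : ℝ, 0 < t → t ≠ p → A + B*t < -(t^q)/q := by
  have hconv := psi_strictConvexOn hq1 hq0
  have hd := psi_deriv hq0 hp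
  refine ⟨-(p^q)/q - (-(p^(q-1)))*p, -(p^(q-1)), by ring, ?_⟩
  intro t ht hne
  rcases lt_or_gt_of_ne hne with hlt | hgt
  · have h := hconv.slope_lt_of_hasDerivAt (mem_Ioi.2 ht) (mem_Ioi.2 hp) hlt hd
    rw [slope_def_field] at h
    have hpt : (0:ℝ) < p - t := by linarith
    rw [div_lt_iff₀ hpt] at h
    linarith
  · have h := hconv.lt_slope_of_hasDerivAt (mem_Ioi.2 hp) (mem_Ioi.2 ht) hgt hd
    rw [slope_def_field] at h
    have hpt : (0:ℝ) < t - p := by linarith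
    rw [lt_div_iff₀ hpt] at h
    linarith

lemma secant_lt {q : ℝ} (hq1 : q < 1) (hq0 : q ≠ 0) {b a : ℝ} (hb : 0 < b) (hba : b < a) :
    ∃ A B : ℝ, -(b^q)/q = A + B*b ∧ -(a^q)/q = A + B*a ∧
      ∀ t : ℝ, 0 < t → (t < b ∨ a < t) → A + B*t < -(t^q)/q := by
  have hconv := psi_strictConvexOn hq1 hq0
  set f : ℝ → ℝ := fun t => -(t^q)/q with hf
  have habp : (0:ℝ) < a - b := by linarith
  set B := (f a - f b)/(a - b) with hB
  have hBe : B * (a - b) = f a - f b := by rw [hB]; field_simp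
  refine ⟨f b - B*b, B, by show f b = f b - B*b + B*b; ring,
    by show f a = f b - B*b + B*a; linear_combination -hBe, ?_⟩
  intro t ht hc
  show f b - B*b + B*t < f t
  rcases hc with hlt | hgt
  · have key := hconv.slope_strict_mono_adjacent (mem_Ioi.2 ht) (mem_Ioi.2 (hb.trans hba)) hlt hba
    rw [div_lt_div_iff₀ (by linarith) habp, ← hBe] at key
    nlinarith [key, habp]
  · have key := hconv.slope_strict_mono_adjacent (mem_Ioi.2 hb) (mem_Ioi.2 (by linarith : (0:ℝ) < t)) hba hgt
    rw [div_lt_div_iff₀ habp (by linarith), ← hBe] at key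
    nlinarith [key, habp, hBe]

lemma mul_f_eq {α : ℝ} (hα0 : 0 < α) (hα1 : α ≠ 1) {t : ℝ} (ht : 0 ≤ t) :
    t * (-(t ^ (α-1)) / (α-1)) = (1/(1-α)) * t ^ α := by
  have hq : α - 1 ≠ 0 := sub_ne_zero.mpr hα1
  have h1α : 1 - α ≠ 0 := sub_ne_zero.mpr (Ne.symm hα1)
  rcases eq_or_lt_of_le ht with h0 | hpos
  · rw [← h0, Real.zero_rpow (ne_of_gt hα0)]
    simp
  · have hrw : t ^ α = t * t ^ (α - 1) := by
      have h := Real.rpow_add hpos 1 (α-1)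
      have e : 1 + (α - 1) = α := by ring
      rw [e] at h
      rw [h, Real.rpow_one]
    rw [hrw]
    field_simp
    ring

end Aux

noncomputable section

set_option maxHeartbeats 1600000 in
/-- For τ ∈ [0,1] and 0 < α < 2 (α ≠ 1), among all decreasing probability vectors
    (λ₀,…,λ₃) with linear entropy 2(1−Σλ²)=τ, the Tsallis α-entropy is minimized
    uniquely by λ = ((1+√(1−τ))/2, (1−√(1−τ))/2, 0, 0). -/
theorem tsallis_min_distribution (τ : ℝ) (hτ0 : 0 ≤ τ) (hτ1 : τ ≤ 1)
    (α : ℝ) (hα0 : 0 < α) (hα2 : α < 2) (hα1 : α ≠ 1)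
    (lam : Fin 4 → ℝ)
    (hord : lam 3 ≤ lam 2 ∧ lam 2 ≤ lam 1 ∧ lam 1 ≤ lam 0)
    (hpos : ∀ k, 0 ≤ lam k)
    (hsum : ∑ k, lam k = 1)
    (hlin : 2 * (1 - ∑ k, (lam k)^2) = τ) :
    let lamstar : Fin 4 → ℝ :=
      ![(1 + Real.sqrt (1 - τ))/2, (1 - Real.sqrt (1 - τ))/2, 0, 0]
    (1/(1-α)) * ((∑ k, lamstar k ^ α) - 1) ≤ (1/(1-α)) * ((∑ k, lam k ^ α) - 1) ∧
    ((1/(1-α)) * ((∑ k, lam k ^ α) - 1) = (1/(1-α)) * ((∑ k, lamstar k ^ α) - 1)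
      ↔ lam = lamstar) := by
  intro lamstar
  have hls : lamstar = ![(1 + Real.sqrt (1 - τ))/2, (1 - Real.sqrt (1 - τ))/2, 0, 0] := rfl
  have Hsum : lam 0 + lam 1 + lam 2 + lam 3 = 1 := by
    rw [Fin.sum_univ_four] at hsum; exact hsum
  have Hsq : lam 0^2 + lam 1^2 + lam 2^2 + lam 3^2 = 1 - τ/2 := by
    rw [Fin.sum_univ_four] at hlin; linarith
  rcases eq_or_lt_of_le hτ0 with hτz | hτp
  · -- τ = 0 : forced lam = (1,0,0,0)
    have hτz' : τ = 0 := hτz.symm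
    subst hτz'
    have hprods : lam 0*lam 1 + lam 0*lam 2 + lam 0*lam 3 + lam 1*lam 2
        + lam 1*lam 3 + lam 2*lam 3 = 0 := by
      linear_combination ((lam 0 + lam 1 + lam 2 + lam 3 + 1)/2) * Hsum - Hsq/2
    have h01 : lam 0 * lam 1 = 0 := by
      have p1 := mul_nonneg (hpos 0) (hpos 1); have p2 := mul_nonneg (hpos 0) (hpos 2)
      have p3 := mul_nonneg (hpos 0) (hpos 3); have p4 := mul_nonneg (hpos 1) (hpos 2)
      have p5 := mul_nonneg (hpos 1) (hpos 3); have p6 := mul_nonneg (hpos 2) (hpos 3)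
      linarith only [hprods, p1, p2, p3, p4, p5, p6]
    have h1 : lam 1 = 0 := by
      rcases mul_eq_zero.mp h01 with h | h
      · exact le_antisymm (h ▸ hord.2.2) (hpos 1)
      · exact h
    have h2 : lam 2 = 0 := le_antisymm (h1 ▸ hord.2.1) (hpos 2)
    have h3 : lam 3 = 0 := le_antisymm (h2 ▸ hord.1) (hpos 3)
    have h0 : lam 0 = 1 := by linarith only [Hsum, h1, h2, h3]
    have hlamstar : lam = lamstar := by
      rw [hls]
      funext k
      fin_cases k <;> simp [Real.sqrt_one, h0, h1, h2, h3]
    rw [hlamstar]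
    exact ⟨le_refl _, by simp⟩
  · -- τ > 0
    set r := Real.sqrt (1 - τ) with hr
    have hr0 : 0 ≤ r := Real.sqrt_nonneg _
    have hr2 : r^2 = 1 - τ := Real.sq_sqrt (by linarith)
    have hr1 : r < 1 := by nlinarith only [hr0, hr2, hτp]
    set a := (1 + r)/2 with ha_def
    set b := (1 - r)/2 with hb_def
    have hab : a + b = 1 := by rw [ha_def, hb_def]; ring
    have hb0 : 0 < b := by rw [hb_def]; linarith only [hr1]
    have hba : b ≤ a := by rw [ha_def, hb_def]; linarith only [hr0]
    have ha2 : (1:ℝ)/2 ≤ a := by rw [ha_def]; linarith only [hr0]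
    have habsq : a^2 + b^2 = 1 - τ/2 := by rw [ha_def, hb_def]; linear_combination hr2/2
    have habm : a * b = τ/4 := by rw [ha_def, hb_def]; linear_combination -hr2/4
    -- spectral gap: each lam k is ≤ b or ≥ a
    have gapq : ∀ k : Fin 4, 0 ≤ lam k^2 - lam k + τ/4 := by
      have g0 : 0 ≤ lam 0^2 - lam 0 + τ/4 := by
        have key : lam 1^2 + lam 2^2 + lam 3^2 ≤ (lam 1 + lam 2 + lam 3)^2 := by
          nlinarith only [mul_nonneg (hpos 1) (hpos 2), mul_nonneg (hpos 1) (hpos 3),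
            mul_nonneg (hpos 2) (hpos 3)]
        have hW : lam 1 + lam 2 + lam 3 = 1 - lam 0 := by linarith only [Hsum]
        rw [hW] at key
        nlinarith only [key, Hsq]
      have g1 : 0 ≤ lam 1^2 - lam 1 + τ/4 := by
        have key : lam 0^2 + lam 2^2 + lam 3^2 ≤ (lam 0 + lam 2 + lam 3)^2 := by
          nlinarith only [mul_nonneg (hpos 0) (hpos 2), mul_nonneg (hpos 0) (hpos 3),
            mul_nonneg (hpos 2) (hpos 3)]
        have hW : lam 0 + lam 2 + lam 3 = 1 - lam 1 := by linarith only [Hsum]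
        rw [hW] at key
        nlinarith only [key, Hsq]
      have g2 : 0 ≤ lam 2^2 - lam 2 + τ/4 := by
        have key : lam 0^2 + lam 1^2 + lam 3^2 ≤ (lam 0 + lam 1 + lam 3)^2 := by
          nlinarith only [mul_nonneg (hpos 0) (hpos 1), mul_nonneg (hpos 0) (hpos 3),
            mul_nonneg (hpos 1) (hpos 3)]
        have hW : lam 0 + lam 1 + lam 3 = 1 - lam 2 := by linarith only [Hsum]
        rw [hW] at key
        nlinarith only [key, Hsq]
      have g3 : 0 ≤ lam 3^2 - lam 3 + τ/4 := by
        have key : lam 0^2 + lam 1^2 + lam 2^2 ≤ (lam 0 + lam 1 + lam 2)^2 := by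
          nlinarith only [mul_nonneg (hpos 0) (hpos 1), mul_nonneg (hpos 0) (hpos 2),
            mul_nonneg (hpos 1) (hpos 2)]
        have hW : lam 0 + lam 1 + lam 2 = 1 - lam 3 := by linarith only [Hsum]
        rw [hW] at key
        nlinarith only [key, Hsq]
      intro k
      fin_cases k
      · exact g0
      · exact g1
      · exact g2
      · exact g3
    have gap : ∀ k : Fin 4, lam k ≤ b ∨ a ≤ lam k := by
      intro k
      have hquad : 0 ≤ (lam k - a) * (lam k - b) := by
        have hexp : (lam k - a) * (lam k - b) = lam k^2 - (a+b)*lam k + a*b := by ring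
        rw [hexp, hab, habm]
        have hg := gapq k
        linarith only [hg]
      rcases le_or_gt (lam k) b with h | h
      · exact Or.inl h
      · right; nlinarith only [hquad, h]
    -- the supporting line
    set q : ℝ := α - 1 with hq_def
    have hq1 : q < 1 := by rw [hq_def]; linarith only [hα2]
    have hq0 : q ≠ 0 := by rw [hq_def]; intro h; exact hα1 (by linarith only [h])
    set f : ℝ → ℝ := fun t => -(t^q)/q with hf
    have hAB : ∃ A B : ℝ, f b = A + B*b ∧ f a = A + B*a ∧
        ∀ t : ℝ, 0 < t → (t < b ∨ a < t) → A + B*t < f t := by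
      rcases eq_or_lt_of_le hba with heq | hlt
      · obtain ⟨A, B, h1, h2⟩ := tangent_lt hq1 hq0 hb0
        refine ⟨A, B, h1, by rw [← heq]; exact h1, ?_⟩
        intro t ht hc
        refine h2 t ht ?_
        rcases hc with h | h
        · exact ne_of_lt h
        · rw [heq]; exact (ne_of_gt h)
      · obtain ⟨A, B, h1, h2, h3⟩ := secant_lt hq1 hq0 hb0 hlt
        exact ⟨A, B, h1, h2, h3⟩
    obtain ⟨A, B, hlb, hla, hstrict⟩ := hAB
    -- pointwise inequality with equality characterization
    have hpt : ∀ k : Fin 4,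
        A * lam k + B * lam k ^ 2 ≤ lam k * f (lam k) ∧
        (lam k * f (lam k) = A * lam k + B * lam k ^ 2 ↔
          lam k = 0 ∨ lam k = a ∨ lam k = b) := by
      intro k
      rcases eq_or_lt_of_le (hpos k) with h0 | ht
      · have e1 : lam k * f (lam k) = 0 := by rw [← h0]; ring
        have e2 : A * lam k + B * lam k ^ 2 = 0 := by rw [← h0]; ring
        exact ⟨by rw [e1, e2], ⟨fun _ => Or.inl h0.symm, fun _ => by rw [e1, e2]⟩⟩
      · have hne0 : lam k ≠ 0 := ne_of_gt ht
        rcases gap k with hle | hge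
        · rcases eq_or_lt_of_le hle with heq | hlt
          · have e : lam k * f (lam k) = A * lam k + B * lam k ^ 2 := by
              rw [heq, hlb]; ring
            exact ⟨e.ge, ⟨fun _ => Or.inr (Or.inr heq), fun _ => e⟩⟩
          · have hs := hstrict (lam k) ht (Or.inl hlt)
            have hmul : A * lam k + B * lam k ^ 2 < lam k * f (lam k) := by
              nlinarith only [hs, ht]
            refine ⟨hmul.le, ⟨fun h => absurd h hmul.ne', fun h => ?_⟩⟩
            rcases h with h | h | h
            · exact absurd h hne0
            · exfalso; rw [h] at hlt; linarith only [hlt, hba]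
            · exact absurd h hlt.ne
        · rcases eq_or_lt_of_le hge with heq | hlt
          · have e : lam k * f (lam k) = A * lam k + B * lam k ^ 2 := by
              rw [← heq, hla]; ring
            exact ⟨e.ge, ⟨fun _ => Or.inr (Or.inl heq.symm), fun _ => e⟩⟩
          · have hs := hstrict (lam k) ht (Or.inr hlt)
            have hmul : A * lam k + B * lam k ^ 2 < lam k * f (lam k) := by
              nlinarith only [hs, ht]
            refine ⟨hmul.le, ⟨fun h => absurd h hmul.ne', fun h => ?_⟩⟩
            rcases h with h | h | h
            · exact absurd h hne0
            · exact absurd h hlt.ne'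
            · exfalso; rw [h] at hlt; linarith only [hlt, hba]
    -- line sum equals target
    have hlinesum : A * lam 0 + B * lam 0^2 + (A * lam 1 + B * lam 1^2)
        + (A * lam 2 + B * lam 2^2) + (A * lam 3 + B * lam 3^2)
        = a * f a + b * f b := by
      have e1 : a * f a + b * f b = A * (a + b) + B * (a^2 + b^2) := by
        rw [hla, hlb]; ring
      rw [e1, hab, habsq]
      linear_combination A * Hsum + B * Hsq
    -- conversion to rpow sums
    have hconv : ∀ t : ℝ, 0 ≤ t → t * f t = (1/(1-α)) * t ^ α := by
      intro t h
      show t * (-(t^q)/q) = _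
      rw [hq_def]
      exact mul_f_eq hα0 hα1 h
    have hlf : lam 0 * f (lam 0) + lam 1 * f (lam 1) + lam 2 * f (lam 2)
        + lam 3 * f (lam 3) = (1/(1-α)) * ∑ k, lam k ^ α := by
      rw [Fin.sum_univ_four, hconv _ (hpos 0), hconv _ (hpos 1), hconv _ (hpos 2),
        hconv _ (hpos 3)]
      ring
    have hstar : (1/(1-α)) * ∑ k, lamstar k ^ α = a * f a + b * f b := by
      have hsz : (0:ℝ) ^ α = 0 := Real.zero_rpow (ne_of_gt hα0)
      have e : ∑ k, lamstar k ^ α = a ^ α + b ^ α := by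
        rw [hls, Fin.sum_univ_four]
        simp only [Matrix.cons_val_zero, Matrix.cons_val_one, Matrix.head_cons,
          Matrix.cons_val_two, Matrix.tail_cons, Matrix.cons_val_three, hsz]
        ring
      rw [e, hconv a (by linarith), hconv b hb0.le]
      ring
    -- main inequality
    have hineq : (1/(1-α)) * ∑ k, lamstar k ^ α ≤ (1/(1-α)) * ∑ k, lam k ^ α := by
      rw [hstar, ← hlf, ← hlinesum]
      have i0 := (hpt 0).1; have i1 := (hpt 1).1; have i2 := (hpt 2).1; have i3 := (hpt 3).1
      linarith only [i0, i1, i2, i3]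
    constructor
    · rw [mul_sub, mul_sub]; linarith only [hineq]
    constructor
    · -- equality implies lam = lamstar
      intro heq
      rw [mul_sub, mul_sub] at heq
      have hesum : lam 0 * f (lam 0) + lam 1 * f (lam 1) + lam 2 * f (lam 2)
          + lam 3 * f (lam 3)
          = A * lam 0 + B * lam 0^2 + (A * lam 1 + B * lam 1^2)
            + (A * lam 2 + B * lam 2^2) + (A * lam 3 + B * lam 3^2) := by
        rw [hlf, hlinesum, ← hstar]
        linarith only [heq]
      have he0 : lam 0 * f (lam 0) = A * lam 0 + B * lam 0^2 := by
        linarith only [hesum, (hpt 0).1, (hpt 1).1, (hpt 2).1, (hpt 3).1]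
      have he1 : lam 1 * f (lam 1) = A * lam 1 + B * lam 1^2 := by
        linarith only [hesum, (hpt 0).1, (hpt 1).1, (hpt 2).1, (hpt 3).1]
      have he2 : lam 2 * f (lam 2) = A * lam 2 + B * lam 2^2 := by
        linarith only [hesum, (hpt 0).1, (hpt 1).1, (hpt 2).1, (hpt 3).1]
      have he3 : lam 3 * f (lam 3) = A * lam 3 + B * lam 3^2 := by
        linarith only [hesum, (hpt 0).1, (hpt 1).1, (hpt 2).1, (hpt 3).1]
      have c0 := (hpt 0).2.mp he0
      have c1 := (hpt 1).2.mp he1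
      have c2 := (hpt 2).2.mp he2
      have c3 := (hpt 3).2.mp he3
      -- counting: lam 2 = 0
      have h2 : lam 2 = 0 := by
        rcases c2 with h | h | h
        · exact h
        · -- lam 2 = a : impossible
          exfalso
          linarith only [hord.2.1, hord.2.2, hpos 3, Hsum, h, ha2, hb0, hab]
        · -- lam 2 = b : impossible
          exfalso
          have hl1 : b ≤ lam 1 := h ▸ hord.2.1
          have hl0 : b ≤ lam 0 := le_trans hl1 hord.2.2
          nlinarith only [mul_nonneg (sub_nonneg.2 hl0) (sub_nonneg.2 hl1),
            mul_nonneg (hpos 0) (hpos 3), mul_nonneg (hpos 1) (hpos 3),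
            hpos 3, hb0, Hsum, Hsq, habsq, hab, h, hl0, hl1,
            mul_pos hb0 hb0]
      have h3 : lam 3 = 0 := le_antisymm (h2 ▸ hord.1) (hpos 3)
      have e1 : lam 0 + lam 1 = a + b := by rw [hab]; linarith only [Hsum, h2, h3]
      have e2 : lam 0^2 + lam 1^2 = a^2 + b^2 := by
        rw [habsq]; rw [h2, h3] at Hsq; linarith only [Hsq]
      have h1' : lam 1 = a + b - lam 0 := by linarith only [e1]
      rw [h1'] at e2
      have hquad : (lam 0 - a) * (lam 0 - b) = 0 := by linear_combination e2 / 2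
      have h0a : lam 0 = a ∧ lam 1 = b := by
        rcases mul_eq_zero.mp hquad with h | h
        · have h0 : lam 0 = a := by linarith only [h]
          exact ⟨h0, by linarith only [h1', h0]⟩
        · have h0 : lam 0 = b := by linarith only [h]
          have h1 : lam 1 = a := by linarith only [h1', h0]
          have : a ≤ b := by rw [← h0, ← h1]; exact hord.2.2
          have hba' : a = b := le_antisymm this hba
          exact ⟨by linarith only [h0, hba'], by linarith only [h1, hba']⟩
      rw [hls]
      funext k
      fin_cases k <;>
        simp only [Fin.isValue, Matrix.cons_val_zero, Matrix.cons_val_one, Matrix.head_cons,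
          Matrix.cons_val_two, Matrix.tail_cons, Matrix.cons_val_three]
      · exact h0a.1
      · exact h0a.2
      · exact h2
      · exact h3
    · intro h
      rw [h]
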